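/- arXiv:1003.2502 — 2 statements merged into one kernel-verified Lean document; each statement's English description precedes it below -/
import Mathlib

section
/- Let δ : [0, ∞) → (0, ∞) be a continuous positive function with δ(r) → 0 as r → ∞, and let g : [0, ∞) → ℝ solve the ODE g''(r) − δ(r) g(r) = 0 with g(0) = 0 and g'(0) = 1. Then g(r) → +∞ as r → ∞ and lim_{r→∞} g'(r)/g(r) = 0. -/
open Filter Topology Set

/-- Auxiliary: the solution stays nonnegative on `[0,∞)`. -/
lemma ode_nonneg_aux
    (δ g g' : ℝ → ℝ)
    (hg0 : g 0 = 0) (hg'0 : g' 0 = 1)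
    (hg : ∀ r, 0 ≤ r → HasDerivWithinAt g (g' r) (Set.Ici 0) r)
    (hg' : ∀ r, 0 ≤ r → HasDerivWithinAt g' (δ r * g r) (Set.Ici 0) r)
    (hδnn : ∀ r, 0 ≤ r → 0 ≤ δ r) :
    ∀ r, 0 ≤ r → 0 ≤ g r := by
  intro T hT
  set S : Set ℝ := {t | t ∈ Set.Icc 0 T ∧ ∀ s ∈ Set.Icc 0 t, 0 ≤ g s} with hS
  have h0S : (0:ℝ) ∈ S := by
    refine ⟨⟨le_refl 0, hT⟩, fun s hs => ?_⟩
    have : s = 0 := le_antisymm hs.2 hs.1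
    simp [this, hg0]
  have hne : S.Nonempty := ⟨0, h0S⟩
  have hbdd : BddAbove S := ⟨T, fun t ht => ht.1.2⟩
  set m := sSup S with hm
  have hm0 : 0 ≤ m := le_csSup hbdd h0S
  have hmT : m ≤ T := csSup_le hne fun t ht => ht.1.2
  have hlt : ∀ s, 0 ≤ s → s < m → 0 ≤ g s := by
    intro s hs0 hsm
    obtain ⟨a, haS, hsa⟩ := exists_lt_of_lt_csSup hne hsm
    exact haS.2 s ⟨hs0, hsa.le⟩
  have hgm : 0 ≤ g m := by
    rcases hm0.lt_or_eq with h0m | h0m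
    · have hc : Tendsto g (𝓝[Set.Ioo 0 m] m) (𝓝 (g m)) :=
        ((hg m hm0).continuousWithinAt).mono (fun x hx => hx.1.le)
      haveI : (𝓝[Set.Ioo 0 m] m).NeBot := by
        rw [nhdsWithin_Ioo_eq_nhdsLT h0m]; infer_instance
      exact ge_of_tendsto hc (eventually_mem_nhdsWithin.mono
        (fun s hs => hlt s hs.1.le hs.2))
    · rw [← h0m, hg0]
  have hmS : m ∈ S := by
    refine ⟨⟨hm0, hmT⟩, fun s hs => ?_⟩
    rcases hs.2.lt_or_eq with h | h
    · exact hlt s hs.1 h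
    · rw [h]; exact hgm
  -- it suffices to show m = T
  rcases hmT.lt_or_eq with hmltT | hmeqT
  swap
  · exact hmS.2 T ⟨hT, hmeqT.ge⟩
  exfalso
  -- g' is monotone on [0,m], hence g' m ≥ 1
  have hg'mono : MonotoneOn g' (Set.Icc 0 m) := by
    apply monotoneOn_of_hasDerivWithinAt_nonneg (convex_Icc 0 m)
      (f' := fun x => δ x * g x)
    · exact fun x hx => ((hg' x hx.1).continuousWithinAt.mono (fun y hy => hy.1))
    · intro x hx
      rw [interior_Icc] at hx
      exact (hg' x hx.1.le).mono (by rw [interior_Icc]; exact fun y hy => hy.1.le)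
    · intro x hx
      rw [interior_Icc] at hx
      exact mul_nonneg (hδnn x hx.1.le) (hmS.2 x ⟨hx.1.le, hx.2.le⟩)
  have hg'm : (1:ℝ) ≤ g' m := by
    have := hg'mono ⟨le_refl 0, hm0⟩ ⟨hm0, le_refl m⟩ hm0
    rwa [hg'0] at this
  -- g' stays positive slightly to the right of m
  have hev : ∀ᶠ s in 𝓝[≥] m, 0 < g' s := by
    have hc : Tendsto g' (𝓝[Set.Ici m] m) (𝓝 (g' m)) :=
      ((hg' m hm0).continuousWithinAt).mono (fun x (hx : m ≤ x) => hm0.trans hx)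
    exact hc.eventually (eventually_gt_nhds (lt_of_lt_of_le zero_lt_one hg'm))
  obtain ⟨u, hmu, huIcc⟩ := mem_nhdsGE_iff_exists_Icc_subset.mp hev
  set b := min u T with hb
  have hmb : m < b := lt_min hmu hmltT
  have hbT : b ≤ T := min_le_right u T
  have hb0 : 0 ≤ b := hm0.trans hmb.le
  -- g is monotone on [m, b]
  have hgmono : MonotoneOn g (Set.Icc m b) := by
    apply monotoneOn_of_hasDerivWithinAt_nonneg (convex_Icc m b) (f' := g')
    · exact fun x hx => ((hg x (hm0.trans hx.1)).continuousWithinAt.mono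
        (fun y hy => hm0.trans hy.1))
    · intro x hx
      rw [interior_Icc] at hx
      exact (hg x (hm0.trans hx.1.le)).mono
        (by rw [interior_Icc]; exact fun y hy => hm0.trans hy.1.le)
    · intro x hx
      rw [interior_Icc] at hx
      exact (huIcc ⟨hx.1.le, hx.2.le.trans (min_le_left u T)⟩).le
  have hbS : b ∈ S := by
    refine ⟨⟨hb0, hbT⟩, fun s hs => ?_⟩
    rcases le_total s m with h | h
    · exact hmS.2 s ⟨hs.1, h⟩
    · exact le_trans hgm (hgmono ⟨le_refl m, hmb.le⟩ ⟨h, hs.2⟩ h)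
  exact absurd (le_csSup hbdd hbS) (not_le.mpr hmb)

/-- Lu–Zhou, inside the proof of Lemma 2.1: let `δ : [0,∞) → (0,∞)` be
continuous with `δ(r) → 0` as `r → ∞`, and let `g` solve `g'' − δ g = 0`, `g(0) = 0`,
`g'(0) = 1` (the derivative of `g` being `g'`).  Then `g(r) → +∞` and `g'(r)/g(r) → 0`
as `r → ∞`. -/
theorem comparison_ode_tendsto_atTop_and_log_deriv_tendsto_zero
    (δ g g' : ℝ → ℝ)
    (hδc : ContinuousOn δ (Set.Ici 0))
    (hδpos : ∀ r, 0 ≤ r → 0 < δ r)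
    (hδ0 : Tendsto δ atTop (𝓝 0))
    (hg0 : g 0 = 0) (hg'0 : g' 0 = 1)
    (hg : ∀ r, 0 ≤ r → HasDerivWithinAt g (g' r) (Set.Ici 0) r)
    (hg' : ∀ r, 0 ≤ r → HasDerivWithinAt g' (δ r * g r) (Set.Ici 0) r) :
    Tendsto g atTop atTop ∧ Tendsto (fun r => g' r / g r) atTop (𝓝 0) := by
  have hgnn : ∀ r, 0 ≤ r → 0 ≤ g r :=
    ode_nonneg_aux δ g g' hg0 hg'0 hg hg' (fun r hr => (hδpos r hr).le)
  -- g' is monotone on [0,∞), hence g' ≥ 1 there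
  have hIoi : Set.Ioi (0:ℝ) ⊆ Set.Ici 0 := fun y hy => Set.mem_Ici.mpr (le_of_lt (Set.mem_Ioi.mp hy))
  have hg'mono : MonotoneOn g' (Set.Ici 0) := by
    apply monotoneOn_of_hasDerivWithinAt_nonneg (convex_Ici 0) (f' := fun x => δ x * g x)
    · exact fun x hx => (hg' x hx).continuousWithinAt
    · intro x hx
      rw [interior_Ici] at hx
      exact (hg' x hx.le).mono (by rw [interior_Ici]; exact hIoi)
    · intro x hx
      rw [interior_Ici] at hx
      exact mul_nonneg (hδpos x hx.le).le (hgnn x hx.le)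
  have hg'ge1 : ∀ r, 0 ≤ r → 1 ≤ g' r := by
    intro r hr
    have := hg'mono (Set.self_mem_Ici) hr hr
    rwa [hg'0] at this
  -- g r ≥ r
  have hgr : ∀ r, 0 ≤ r → r ≤ g r := by
    have hmono : MonotoneOn (fun r => g r - r) (Set.Ici 0) := by
      apply monotoneOn_of_hasDerivWithinAt_nonneg (convex_Ici 0) (f' := fun x => g' x - 1)
      · exact fun x hx => ((hg x hx).continuousWithinAt.sub continuousWithinAt_id)
      · intro x hx
        rw [interior_Ici] at hx
        exact (((hg x hx.le).mono (by rw [interior_Ici]; exact hIoi)).sub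
          (hasDerivWithinAt_id x _))
      · intro x hx
        rw [interior_Ici] at hx
        exact sub_nonneg.mpr (hg'ge1 x hx.le)
    intro r hr
    have := hmono Set.self_mem_Ici hr hr
    simp only [hg0, sub_zero, zero_sub, neg_zero] at this
    linarith
  have hgtop : Tendsto g atTop atTop := by
    apply tendsto_atTop_mono' atTop (f₁ := id)
    · filter_upwards [eventually_ge_atTop (0:ℝ)] with r hr using hgr r hr
    · exact tendsto_id
  refine ⟨hgtop, ?_⟩
  rw [NormedAddCommGroup.tendsto_nhds_zero]
  intro ε hε
  set e := ε / 2 with he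
  have he0 : 0 < e := by positivity
  obtain ⟨R0, hR0⟩ := eventually_atTop.mp
    (hδ0.eventually (eventually_lt_nhds (by positivity : (0:ℝ) < e ^ 2)))
  set R := max R0 1 with hR
  have hR1 : (1:ℝ) ≤ R := le_max_right _ _
  have hR0le : 0 ≤ R := le_trans zero_le_one hR1
  have hδR : ∀ r, R ≤ r → δ r ≤ e ^ 2 := fun r hr =>
    (hR0 r (le_trans (le_max_left _ _) hr)).le
  have hIR : Set.Ici R ⊆ Set.Ici (0:ℝ) := fun y hy => le_trans hR0le hy
  set h : ℝ → ℝ := fun r => Real.exp (e * r) * (g' r - e * g r) with hhdef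
  -- h is antitone on [R, ∞)
  have hderiv : ∀ x, R ≤ x →
      HasDerivWithinAt h (Real.exp (e * x) * ((δ x - e ^ 2) * g x)) (Set.Ici R) x := by
    intro x hx
    have hx0 : (0:ℝ) ≤ x := le_trans hR0le hx
    have hexp : HasDerivWithinAt (fun r => Real.exp (e * r)) (Real.exp (e * x) * e)
        (Set.Ici R) x := (((hasDerivAt_id x).const_mul e).exp.hasDerivWithinAt).congr_deriv
        (by simp)
    have hsub : HasDerivWithinAt (fun r => g' r - e * g r) (δ x * g x - e * g' x)
        (Set.Ici R) x := (((hg' x hx0).sub ((hg x hx0).const_mul e)).mono hIR)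
    have : HasDerivWithinAt (fun r => Real.exp (e * r) * (g' r - e * g r))
        (Real.exp (e * x) * e * (g' x - e * g x) + Real.exp (e * x) * (δ x * g x - e * g' x))
        (Set.Ici R) x := hexp.mul hsub
    convert this using 1
    ring
  have hanti : AntitoneOn h (Set.Ici R) := by
    apply antitoneOn_of_hasDerivWithinAt_nonpos (convex_Ici R)
      (f' := fun x => Real.exp (e * x) * ((δ x - e ^ 2) * g x))
    · exact fun x hx => (hderiv x hx).continuousWithinAt
    · intro x hx
      rw [interior_Ici] at hx
      exact (hderiv x hx.le).mono (by rw [interior_Ici]; exact fun y hy => Set.mem_Ici.mpr (le_of_lt (Set.mem_Ioi.mp hy)))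
    · intro x hx
      rw [interior_Ici] at hx
      have hx0 : (0:ℝ) ≤ x := le_trans hR0le hx.le
      have h1 : δ x - e ^ 2 ≤ 0 := sub_nonpos.mpr (hδR x hx.le)
      exact mul_nonpos_of_nonneg_of_nonpos (Real.exp_nonneg _)
        (mul_nonpos_of_nonpos_of_nonneg h1 (hgnn x hx0))
  set C := max (h R) 0 with hC
  have hC0 : 0 ≤ C := le_max_right _ _
  -- main bound
  have hbound : ∀ r, R ≤ r → g' r - e * g r ≤ C := by
    intro r hr
    have hr0 : (0:ℝ) ≤ r := le_trans hR0le hr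
    have h1 : h r ≤ C := le_trans (hanti Set.self_mem_Ici hr hr) (le_max_left _ _)
    have hexp1 : (1:ℝ) ≤ Real.exp (e * r) :=
      Real.one_le_exp (by positivity)
    have hexp0 : (0:ℝ) < Real.exp (e * r) := Real.exp_pos _
    have h1' : Real.exp (e * r) * (g' r - e * g r) ≤ C := h1
    rcases le_or_gt (g' r - e * g r) 0 with hx | hx
    · linarith
    · nlinarith
  refine eventually_atTop.mpr ⟨max R (C / e + 1), fun r hr => ?_⟩
  have hrR : R ≤ r := le_trans (le_max_left _ _) hr
  have hr0 : (0:ℝ) ≤ r := le_trans hR0le hrR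
  have hr1 : (1:ℝ) ≤ r := le_trans hR1 hrR
  have hgpos : 0 < g r := lt_of_lt_of_le (by linarith) (hgr r hr0)
  have hratio_pos : 0 < g' r / g r := div_pos (by linarith [hg'ge1 r hr0]) hgpos
  have hCr : C / g r < e := by
    have hrC : C / e + 1 ≤ r := le_trans (le_max_right _ _) hr
    have h2 : C < e * r := by
      have : e * (C / e + 1) = C + e := by field_simp
      nlinarith
    have h3 : C / g r ≤ C / r :=
      div_le_div_of_nonneg_left hC0 (by linarith) (hgr r hr0) |>.trans_eq rfl
    calc C / g r ≤ C / r := h3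
      _ < e := by rw [div_lt_iff₀ (by linarith)]; nlinarith
  have hub : g' r / g r < ε := by
    have hb := hbound r hrR
    have : g' r / g r ≤ e + C / g r := by
      rw [div_le_iff₀ hgpos]
      have key : (e + C / g r) * g r = e * g r + C := by
        field_simp
      rw [key]; linarith
    calc g' r / g r ≤ e + C / g r := this
      _ < e + e := by linarith
      _ = ε := by rw [he]; ring
  rw [Real.norm_eq_abs, abs_of_pos hratio_pos]
  exact hub
end

section
/- Let ε > 0, R > 0, and let f be a positive nonincreasing differentiable function on an interval [x₀ − R, ∞) satisfying 2ε f(x − R) − f'(x − R) ≥ 4ε f(x) for all x ≥ x₀. Then f(x − R) ≥ 2(1 − e^{−2εR}) f(x + R) for all x ≥ x₀; consequently, if 2(1 − e^{−2εR}) ≥ 5/4, then f(x − R) ≥ (5/4)^k f(x + (2k − 1)R) for every positive integer k and all x ≥ x₀. -/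
open Set

/-- Lu–Zhou, iteration argument in the proof of Theorem 3.1: let
`ε, R > 0` and let `f` be a positive nonincreasing differentiable function on
`[x₀ − R, ∞)` (with derivative `f'`) satisfying `2ε f(x−R) − f'(x−R) ≥ 4ε f(x)` for all
`x ≥ x₀`.  Then `f(x−R) ≥ 2(1 − e^{−2εR}) f(x+R)` for all `x ≥ x₀`; consequently, if
`2(1 − e^{−2εR}) ≥ 5/4`, then `f(x−R) ≥ (5/4)^k f(x+(2k−1)R)` for every positive integer
`k` and all `x ≥ x₀`. -/
theorem decay_iteration_of_differential_inequality
    (ε R x₀ : ℝ) (hε : 0 < ε) (hR : 0 < R)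
    (f f' : ℝ → ℝ)
    (hderiv : ∀ x ∈ Ici (x₀ - R), HasDerivWithinAt f (f' x) (Ici (x₀ - R)) x)
    (hfpos : ∀ x ∈ Ici (x₀ - R), 0 < f x)
    (hfmono : AntitoneOn f (Ici (x₀ - R)))
    (hineq : ∀ x : ℝ, x₀ ≤ x → 4 * ε * f x ≤ 2 * ε * f (x - R) - f' (x - R)) :
    (∀ x : ℝ, x₀ ≤ x → 2 * (1 - Real.exp (-2 * ε * R)) * f (x + R) ≤ f (x - R)) ∧
    (5 / 4 ≤ 2 * (1 - Real.exp (-2 * ε * R)) →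
      ∀ x : ℝ, x₀ ≤ x → ∀ k : ℕ, 0 < k →
        (5 / 4 : ℝ) ^ k * f (x + (2 * (k : ℝ) - 1) * R) ≤ f (x - R)) := by
  have hfd : ∀ t : ℝ, x₀ - R < t → HasDerivAt f (f' t) t := fun t ht =>
    (hderiv t ht.le).hasDerivAt (Ici_mem_nhds ht)
  have hcont : ContinuousOn f (Ici (x₀ - R)) := fun t ht => (hderiv t ht).continuousWithinAt
  have key : ∀ x : ℝ, x₀ ≤ x → 2 * (1 - Real.exp (-2 * ε * R)) * f (x + R) ≤ f (x - R) := by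
    intro x hx
    set C := f (x + R) with hC
    set g : ℝ → ℝ := fun t => Real.exp (-2 * ε * t) * (f t - 2 * C) with hg
    have hmem : Icc (x - R) x ⊆ Ici (x₀ - R) := by
      intro t ht; simp only [mem_Icc] at ht; simp only [mem_Ici]; linarith [ht.1]
    have hgd : ∀ t ∈ Ioo (x - R) x,
        HasDerivAt g (Real.exp (-2*ε*t) * (f' t - 2*ε*(f t - 2*C))) t := by
      intro t ht
      have ht1 : x₀ - R < t := by linarith [ht.1]
      have h0 : HasDerivAt (fun s : ℝ => -2*ε*s) (-2*ε) t := by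
        simpa using (hasDerivAt_id t).const_mul (-2*ε)
      have h1 : HasDerivAt (fun s : ℝ => Real.exp (-2*ε*s))
          (Real.exp (-2*ε*t) * (-2*ε)) t := h0.exp
      have h2 : HasDerivAt (fun t => f t - 2*C) (f' t) t := (hfd t ht1).sub_const _
      have := h1.mul h2
      exact this.congr_deriv (by ring)
    have hganti : AntitoneOn g (Icc (x - R) x) := by
      apply antitoneOn_of_deriv_nonpos (convex_Icc _ _)
      · exact ((Real.continuous_exp.comp (continuous_const.mul continuous_id)).continuousOn.mul
          ((hcont.mono hmem).sub continuousOn_const))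
      · intro t ht
        rw [interior_Icc] at ht
        exact ((hgd t ht).differentiableAt).differentiableWithinAt
      · intro t ht
        rw [interior_Icc] at ht
        rw [(hgd t ht).deriv]
        have hpos := Real.exp_pos (-2*ε*t)
        have h4 := hineq (t + R) (by linarith [ht.1])
        simp only [add_sub_cancel_right] at h4
        have h5 : C ≤ f (t + R) := hfmono (by simp only [mem_Ici]; linarith [ht.1])
          (by simp only [mem_Ici]; linarith) (by linarith [ht.2])
        have hkey : f' t - 2*ε*(f t - 2*C) ≤ 0 := by nlinarith
        exact mul_nonpos_of_nonneg_of_nonpos hpos.le hkey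
    have hmono := hganti (show x - R ∈ Icc (x - R) x from ⟨le_refl _, by linarith⟩)
      (show x ∈ Icc (x - R) x from ⟨by linarith, le_refl _⟩) (by linarith)
    -- hmono : g x ≤ g (x - R)
    have hA : (0:ℝ) < Real.exp (-2*ε*(x-R)) := Real.exp_pos _
    have hE : (0:ℝ) < Real.exp (-2*ε*R) := Real.exp_pos _
    have hprod : Real.exp (-2*ε*(x-R)) * Real.exp (-2*ε*R) = Real.exp (-2*ε*x) := by
      rw [← Real.exp_add]; ring_nf
    have hfx : C ≤ f x := hfmono (by simp only [mem_Ici]; linarith)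
      (by simp only [mem_Ici]; linarith) (by linarith)
    have hCpos : 0 < C := hfpos (x + R) (by simp only [mem_Ici]; linarith)
    simp only [hg] at hmono
    rw [← hprod, mul_assoc] at hmono
    have step : Real.exp (-2*ε*R) * (f x - 2*C) ≤ f (x - R) - 2*C :=
      (mul_le_mul_iff_right₀ hA).mp hmono
    nlinarith [step, hE, hCpos, hfx]
  refine ⟨key, fun hc => ?_⟩
  have main : ∀ k : ℕ, 0 < k → ∀ x : ℝ, x₀ ≤ x →
      (5 / 4 : ℝ) ^ k * f (x + (2 * (k : ℝ) - 1) * R) ≤ f (x - R) := by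
    intro k
    induction k with
    | zero => intro h; exact absurd h (lt_irrefl 0)
    | succ n ih =>
      intro _ x hx
      by_cases hn : n = 0
      · subst hn
        have h1 := key x hx
        have hfp : 0 < f (x + R) := hfpos (x + R) (by simp only [mem_Ici]; linarith)
        have : (2 * (1:ℝ) - 1) * R = R := by ring
        push_cast
        rw [this]
        calc (5/4 : ℝ) ^ 1 * f (x + R) = (5/4) * f (x + R) := by ring
          _ ≤ 2 * (1 - Real.exp (-2 * ε * R)) * f (x + R) := by nlinarith
          _ ≤ f (x - R) := h1
      · have hn' : 0 < n := Nat.pos_of_ne_zero hn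
        have ih' := ih hn' (x + 2 * R) (by linarith)
        have harg : x + 2 * R + (2 * (n : ℝ) - 1) * R = x + (2 * ((n:ℝ)+1) - 1) * R := by ring
        rw [harg] at ih'
        have harg2 : x + 2 * R - R = x + R := by ring
        rw [harg2] at ih'
        have h1 := key x hx
        have hfp : 0 < f (x + (2 * ((n:ℝ)+1) - 1) * R) := hfpos _
          (by simp only [mem_Ici]; nlinarith [Nat.cast_nonneg (α := ℝ) n])
        have h2 : (5/4 : ℝ) * f (x + R) ≤ f (x - R) := by
          have hfp2 : 0 < f (x + R) := hfpos (x + R) (by simp only [mem_Ici]; linarith)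
          nlinarith
        push_cast
        calc (5/4 : ℝ) ^ (n+1) * f (x + (2 * ((n:ℝ)+1) - 1) * R)
            = (5/4) * ((5/4 : ℝ) ^ n * f (x + (2 * ((n:ℝ)+1) - 1) * R)) := by ring
          _ ≤ (5/4) * f (x + R) := by nlinarith
          _ ≤ f (x - R) := h2
  intro x hx k hk
  exact main k hk x hx
end
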